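/- Let S be a finite symmetric subset of a group with 1 ∈ S, and let k ≥ 3 be an integer. Then |S^k|/|S| ≤ (|S³|/|S|)^{k-2}. -/

import Mathlib

open scoped Pointwise

/-- **Ruzsa's tripling inequality**: if `S` is a finite symmetric subset of a group
containing `1` and `k ≥ 3`, then `|S^k| / |S| ≤ (|S³| / |S|)^(k-2)`. -/
theorem ruzsa_tripling {G : Type*} [Group G] (S : Set G) (hfin : S.Finite)
    (hone : (1 : G) ∈ S) (hsym : S = S⁻¹) (k : ℕ) (hk : 3 ≤ k) :
    (Nat.card ↥(S ^ k) : ℝ) / (Nat.card ↥S : ℝ) ≤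
      ((Nat.card ↥(S * S * S) : ℝ) / (Nat.card ↥S : ℝ)) ^ (k - 2) := by
  classical
  set A : Finset G := hfin.toFinset with hA
  have hSA : S = (A : Set G) := by simp [hA]
  have hcard : ∀ n : ℕ, Nat.card ↥(S ^ n) = (A ^ n).card := by
    intro n
    rw [hSA, ← Finset.coe_pow, Nat.card_coe_set_eq, Set.ncard_coe_finset]
  have hcard3 : Nat.card ↥(S * S * S) = (A ^ 3).card := by
    rw [hSA, ← Finset.coe_mul, ← Finset.coe_mul, Nat.card_coe_set_eq,
      Set.ncard_coe_finset, pow_succ, pow_two]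
  have hcardS : Nat.card ↥S = A.card := by
    rw [hSA, Nat.card_coe_set_eq, Set.ncard_coe_finset]
  have hone' : (1 : G) ∈ A := by rw [hA, Set.Finite.mem_toFinset]; exact hone
  have hApos : (0 : ℝ) < A.card := by
    exact_mod_cast Finset.card_pos.2 ⟨1, hone'⟩
  have hAsym : A⁻¹ = A := by
    apply Finset.coe_injective
    rw [Finset.coe_inv, ← hSA, ← hsym, hSA]
  set K : ℝ := ((A ^ 3).card : ℝ) / (A.card : ℝ) with hK
  have h3 : ((A ^ 3).card : ℝ) ≤ K * A.card := by
    rw [hK, div_mul_cancel₀]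
    exact hApos.ne'
  have := Finset.small_pow_of_small_tripling hk h3 hAsym
  rw [hcard, hcard3, hcardS]
  rw [div_le_iff₀ hApos]
  calc ((A ^ k).card : ℝ) ≤ K ^ (k - 2) * A.card := this
    _ = _ := by rw [hK]
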